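/- Let H be a quasi-homogeneous polynomial of generalized degree χ+δ with complex coefficients and 𝓗 the derivation P ↦ −(∂H/∂x2)·∂P/∂x1 + (∂H/∂x1)·∂P/∂x2 on complex polynomials in x1,x2. Then the adjoint 𝓗* of 𝓗 with respect to the inner product ⟨⟨P,Q⟩⟩ = (P(∂1,∂2) applied to Q̄)(0) is given by 𝓗*(P) = x2·((∂1H̄)(∂1,∂2)P) − x1·((∂2H̄)(∂1,∂2)P), and moreover this equals (∂1H̄)(∂1,∂2)(x2·P) − (∂2H̄)(∂1,∂2)(x1·P), where H̄ denotes the polynomial with conjugated coefficients and A(∂1,∂2) is the constant-coefficient differential operator obtained by substituting ∂/∂x1, ∂/∂x2 into a polynomial A. -/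

import Mathlib

open MvPolynomial

/-- The polynomial with complex-conjugated coefficients. -/
noncomputable def conjPoly (P : MvPolynomial (Fin 2) ℂ) : MvPolynomial (Fin 2) ℂ :=
  P.map (starRingEnd ℂ)

/-- The constant-coefficient differential operator `A(∂1,∂2)` obtained by substituting the
partial derivative operators `∂/∂x1, ∂/∂x2` into the polynomial `A`, applied to `P`. -/
noncomputable def diffOp (A P : MvPolynomial (Fin 2) ℂ) : MvPolynomial (Fin 2) ℂ :=
  ∑ d ∈ A.support, A.coeff d •
    (((pderiv (0 : Fin 2)).toLinearMap ^ (d 0))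
      (((pderiv (1 : Fin 2)).toLinearMap ^ (d 1)) P))

/-- The Fischer inner product `⟨⟨P,Q⟩⟩ = P(∂1,∂2)Q̄(x)|_{x=0}` on complex polynomials. -/
noncomputable def finner (P Q : MvPolynomial (Fin 2) ℂ) : ℂ :=
  constantCoeff (diffOp P (conjPoly Q))

/-- The Hamiltonian derivation `𝓗 : P ↦ −(∂H/∂x2)·∂P/∂x1 + (∂H/∂x1)·∂P/∂x2`. -/
noncomputable def hamDer (H P : MvPolynomial (Fin 2) ℂ) : MvPolynomial (Fin 2) ℂ :=
  -(pderiv 1 H) * pderiv 0 P + (pderiv 0 H) * pderiv 1 P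

noncomputable section HamAux

/-- The partial derivative as a linear endomorphism. -/
abbrev Dop (i : Fin 2) : Module.End ℂ (MvPolynomial (Fin 2) ℂ) := (pderiv i).toLinearMap

lemma pderiv_comm' (i j : Fin 2) (P : MvPolynomial (Fin 2) ℂ) :
    pderiv i (pderiv j P) = pderiv j (pderiv i P) := by
  induction P using MvPolynomial.induction_on' with
  | monomial s a =>
    rcases eq_or_ne i j with rfl | hij
    · rfl
    · simp only [pderiv_monomial]
      rw [tsub_tsub, tsub_tsub, add_comm (Finsupp.single j 1)]
      congr 1
      have h1 : ((s - Finsupp.single j 1 : Fin 2 →₀ ℕ)) i = s i := by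
        simp [Finsupp.tsub_apply, Finsupp.single_apply, Ne.symm hij]
      have h2 : ((s - Finsupp.single i 1 : Fin 2 →₀ ℕ)) j = s j := by
        simp [Finsupp.tsub_apply, Finsupp.single_apply, hij]
      rw [h1, h2]; ring
  | add p q hp hq => simp [hp, hq]

lemma commD (i j : Fin 2) : Commute (Dop i) (Dop j) :=
  LinearMap.ext fun P => pderiv_comm' i j P

/-- The monomial differential operator. -/
def Dmon (d : Fin 2 →₀ ℕ) : Module.End ℂ (MvPolynomial (Fin 2) ℂ) :=
  Dop 0 ^ (d 0) * Dop 1 ^ (d 1)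

lemma commD_Dmon (j : Fin 2) (d : Fin 2 →₀ ℕ) : Commute (Dop j) (Dmon d) :=
  ((commD j 0).pow_right _).mul_right ((commD j 1).pow_right _)

lemma diffOp_eq_sum (A P : MvPolynomial (Fin 2) ℂ) :
    diffOp A P = Finsupp.sum (AddMonoidAlgebra.coeff A) (fun d c => c • Dmon d P) := rfl

lemma diffOp_eq_sum' (A P : MvPolynomial (Fin 2) ℂ) :
    diffOp A P = ∑ d ∈ A.support, A.coeff d • Dmon d P := rfl

lemma Dmon_zero : Dmon 0 = 1 := by
  simp [Dmon]

lemma Dmon_add (a b : Fin 2 →₀ ℕ) : Dmon (a + b) = Dmon a * Dmon b := by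
  have h : Dop 0 ^ (b 0) * Dop 1 ^ (a 1) = Dop 1 ^ (a 1) * Dop 0 ^ (b 0) :=
    ((commD 0 1).pow_pow (b 0) (a 1)).eq
  simp only [Dmon, Finsupp.add_apply, pow_add]
  rw [mul_assoc (Dop 0 ^ a 0), ← mul_assoc (Dop 0 ^ b 0), h]
  rw [mul_assoc (Dop 0 ^ a 0), mul_assoc (Dop 1 ^ a 1), ← mul_assoc (Dop 0 ^ a 0)]

lemma Dmon_single (j : Fin 2) : Dmon (Finsupp.single j 1) = Dop j := by
  fin_cases j <;>
    simp [Dmon, Finsupp.single_apply, Finsupp.single_eq_same]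

lemma diffOp_monomial (d : Fin 2 →₀ ℕ) (c : ℂ) (P : MvPolynomial (Fin 2) ℂ) :
    diffOp (monomial d c) P = c • Dmon d P := by
  by_cases hc : c = 0
  · simp [diffOp_eq_sum', hc, support_monomial]
  · simp [diffOp_eq_sum', support_monomial, hc, coeff_monomial]

lemma diffOp_add_left (A B P : MvPolynomial (Fin 2) ℂ) :
    diffOp (A + B) P = diffOp A P + diffOp B P := by
  rw [diffOp_eq_sum, diffOp_eq_sum, diffOp_eq_sum]
  exact Finsupp.sum_add_index' (fun d => by simp) (fun d c₁ c₂ => by rw [add_smul])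

lemma diffOp_C_mul_left (c : ℂ) (A P : MvPolynomial (Fin 2) ℂ) :
    diffOp (C c * A) P = c • diffOp A P := by
  induction A using MvPolynomial.induction_on' with
  | monomial d a => rw [C_mul_monomial, diffOp_monomial, diffOp_monomial, mul_smul]
  | add p q hp hq => rw [mul_add, diffOp_add_left, diffOp_add_left, hp, hq, smul_add]

lemma diffOp_smul_left (c : ℂ) (A P : MvPolynomial (Fin 2) ℂ) :
    diffOp (c • A) P = c • diffOp A P := by
  rw [smul_eq_C_mul, diffOp_C_mul_left]

lemma diffOp_zero_left (P : MvPolynomial (Fin 2) ℂ) : diffOp 0 P = 0 := by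
  simp [diffOp_eq_sum']

lemma diffOp_sub_left (A B P : MvPolynomial (Fin 2) ℂ) :
    diffOp (A - B) P = diffOp A P - diffOp B P := by
  have : A - B = A + (-1 : ℂ) • B := by
    rw [neg_one_smul]; ring
  rw [this, diffOp_add_left, diffOp_smul_left, neg_one_smul]; ring

lemma diffOp_add_right (A P Q : MvPolynomial (Fin 2) ℂ) :
    diffOp A (P + Q) = diffOp A P + diffOp A Q := by
  simp [diffOp_eq_sum', map_add, smul_add, Finset.sum_add_distrib]

lemma diffOp_sub_right (A P Q : MvPolynomial (Fin 2) ℂ) :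
    diffOp A (P - Q) = diffOp A P - diffOp A Q := by
  simp [diffOp_eq_sum', map_sub, smul_sub, Finset.sum_sub_distrib]

lemma diffOp_smul_right (c : ℂ) (A P : MvPolynomial (Fin 2) ℂ) :
    diffOp A (c • P) = c • diffOp A P := by
  simp [diffOp_eq_sum', map_smul, Finset.smul_sum, smul_comm c]

lemma diffOp_C (c : ℂ) (P : MvPolynomial (Fin 2) ℂ) : diffOp (C c) P = c • P := by
  rw [show (C c : MvPolynomial (Fin 2) ℂ) = monomial 0 c from rfl, diffOp_monomial,
    Dmon_zero]
  rfl

lemma diffOp_mul_X (A : MvPolynomial (Fin 2) ℂ) (j : Fin 2) (P : MvPolynomial (Fin 2) ℂ) :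
    diffOp (A * X j) P = diffOp A (pderiv j P) := by
  induction A using MvPolynomial.induction_on' with
  | monomial d c =>
    rw [show (X j : MvPolynomial (Fin 2) ℂ) = monomial (Finsupp.single j 1) 1 from rfl,
      monomial_mul, mul_one, diffOp_monomial, diffOp_monomial, Dmon_add, Dmon_single]
    rfl
  | add p q hp hq =>
    rw [add_mul, diffOp_add_left, diffOp_add_left, hp, hq]

lemma pderiv_diffOp (j : Fin 2) (B P : MvPolynomial (Fin 2) ℂ) :
    pderiv j (diffOp B P) = diffOp B (pderiv j P) := by
  rw [diffOp_eq_sum', diffOp_eq_sum']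
  rw [show (pderiv j : MvPolynomial (Fin 2) ℂ → MvPolynomial (Fin 2) ℂ) = Dop j from rfl]
  rw [map_sum]
  refine Finset.sum_congr rfl fun d _ => ?_
  rw [map_smul]
  exact congrArg _ (LinearMap.congr_fun (commD_Dmon j d).eq P)

lemma diffOp_mul (A B P : MvPolynomial (Fin 2) ℂ) :
    diffOp (A * B) P = diffOp A (diffOp B P) := by
  induction A using MvPolynomial.induction_on generalizing P with
  | C c =>
    rw [show (C c : MvPolynomial (Fin 2) ℂ) * B = c • B from by rw [smul_eq_C_mul],
      diffOp_smul_left, diffOp_C]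
  | add p q hp hq =>
    rw [add_mul, diffOp_add_left, diffOp_add_left, hp, hq]
  | mul_X p j hp =>
    have h : p * X j * B = p * B * X j := by ring
    rw [h, diffOp_mul_X, hp, diffOp_mul_X, pderiv_diffOp]

lemma D_pow_monomial (i : Fin 2) (k : ℕ) (b : Fin 2 →₀ ℕ) (c : ℂ) :
    (Dop i ^ k) (monomial b c) =
      monomial (b - Finsupp.single i k) (c * (b i).descFactorial k) := by
  induction k with
  | zero => simp
  | succ k ih =>
    rw [pow_succ', Module.End.mul_apply, ih,
      show (Dop i) (monomial (b - Finsupp.single i k)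
          (c * ((b i).descFactorial k : ℂ))) =
        pderiv i (monomial (b - Finsupp.single i k)
          (c * ((b i).descFactorial k : ℂ))) from rfl,
      pderiv_monomial]
    rw [tsub_tsub, ← Finsupp.single_add]
    have happ : ((b - Finsupp.single i k : Fin 2 →₀ ℕ)) i = b i - k := by
      simp [Finsupp.tsub_apply]
    rw [happ]
    congr 1
    rw [Nat.descFactorial_succ]
    push_cast
    ring

lemma constCoeff_Dmon_monomial (a b : Fin 2 →₀ ℕ) (c : ℂ) :
    constantCoeff (Dmon a (monomial b c)) =
      if a = b then c * (a 0).factorial * (a 1).factorial else 0 := by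
  rw [show Dmon a (monomial b c) = (Dop 0 ^ (a 0)) ((Dop 1 ^ (a 1)) (monomial b c)) from rfl,
    D_pow_monomial, D_pow_monomial, constantCoeff_monomial]
  have hb0 : ((b - Finsupp.single 1 (a 1) : Fin 2 →₀ ℕ)) 0 = b 0 := by
    simp [Finsupp.tsub_apply, Finsupp.single_apply]
  rw [hb0]
  by_cases hab : a = b
  · subst hab
    have hE : a - Finsupp.single 1 (a 1) - Finsupp.single 0 (a 0) = 0 := by
      ext j
      fin_cases j <;> simp [Finsupp.tsub_apply, Finsupp.single_apply]
    rw [if_pos hE, if_pos rfl, Nat.descFactorial_self, Nat.descFactorial_self]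
    push_cast
    ring
  · rw [if_neg hab]
    by_cases hE : b - Finsupp.single 1 (a 1) - Finsupp.single 0 (a 0) = 0
    · rw [if_pos hE]
      have h0 : b 0 ≤ a 0 := by
        have := DFunLike.congr_fun hE 0
        simp [Finsupp.tsub_apply, Finsupp.single_apply] at this
        omega
      have h1 : b 1 ≤ a 1 := by
        have := DFunLike.congr_fun hE 1
        simp [Finsupp.tsub_apply, Finsupp.single_apply] at this
        omega
      have hne : a 0 ≠ b 0 ∨ a 1 ≠ b 1 := by
        by_contra hc
        push_neg at hc
        refine hab (Finsupp.ext fun j => ?_)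
        fin_cases j
        · exact hc.1
        · exact hc.2
      rcases hne with h | h
      · rw [Nat.descFactorial_eq_zero_iff_lt.2 (lt_of_le_of_ne h0 (Ne.symm h))]
        simp
      · rw [Nat.descFactorial_eq_zero_iff_lt.2 (lt_of_le_of_ne h1 (Ne.symm h))]
        simp
    · rw [if_neg hE]

lemma constCoeff_diffOp_symm (P Q : MvPolynomial (Fin 2) ℂ) :
    constantCoeff (diffOp P Q) = constantCoeff (diffOp Q P) := by
  induction P using MvPolynomial.induction_on' generalizing Q with
  | monomial a c =>
    induction Q using MvPolynomial.induction_on' with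
    | monomial b c' =>
      rw [diffOp_monomial, diffOp_monomial, constantCoeff_smul, constantCoeff_smul,
        constCoeff_Dmon_monomial, constCoeff_Dmon_monomial]
      by_cases h : a = b
      · subst h
        simp only [smul_eq_mul, eq_self_iff_true, if_true]
        ring
      · rw [if_neg h, if_neg (Ne.symm h)]
        simp
    | add p q hp hq =>
      rw [diffOp_add_right, diffOp_add_left, map_add, map_add, hp, hq]
  | add p q hp hq =>
    rw [diffOp_add_left, diffOp_add_right, map_add, map_add, hp, hq]

lemma conjPoly_conjPoly (P : MvPolynomial (Fin 2) ℂ) : conjPoly (conjPoly P) = P := by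
  rw [conjPoly, conjPoly, MvPolynomial.map_map]
  have h : (starRingEnd ℂ).comp (starRingEnd ℂ) = RingHom.id ℂ := RingHom.ext fun x => by simp
  rw [h, MvPolynomial.map_id]

lemma conjPoly_mul (P Q : MvPolynomial (Fin 2) ℂ) :
    conjPoly (P * Q) = conjPoly P * conjPoly Q := by
  simp [conjPoly]

lemma conjPoly_pderiv (i : Fin 2) (P : MvPolynomial (Fin 2) ℂ) :
    conjPoly (pderiv i P) = pderiv i (conjPoly P) := by
  simp [conjPoly, pderiv_map]

lemma finner_X_mul (i : Fin 2) (F Q : MvPolynomial (Fin 2) ℂ) :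
    finner (X i * F) Q = finner F (pderiv i Q) := by
  rw [finner, finner, mul_comm, diffOp_mul_X, conjPoly_pderiv]

lemma finner_diffOp (A P Q : MvPolynomial (Fin 2) ℂ) :
    finner (diffOp A P) Q = finner P (conjPoly A * Q) := by
  rw [finner, finner, constCoeff_diffOp_symm, ← diffOp_mul, constCoeff_diffOp_symm]
  congr 1
  rw [conjPoly_mul, conjPoly_conjPoly, mul_comm]

lemma finner_sub_left (F G Q : MvPolynomial (Fin 2) ℂ) :
    finner (F - G) Q = finner F Q - finner G Q := by
  rw [finner, finner, finner, diffOp_sub_left, map_sub]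

lemma finner_sub_right (P F G : MvPolynomial (Fin 2) ℂ) :
    finner P (F - G) = finner P F - finner P G := by
  rw [finner, finner, finner, show conjPoly (F - G) = conjPoly F - conjPoly G from by
    simp [conjPoly], diffOp_sub_right, map_sub]

lemma diffOp_X_mul_right (A : MvPolynomial (Fin 2) ℂ) (i : Fin 2) (P : MvPolynomial (Fin 2) ℂ) :
    diffOp A (X i * P) = X i * diffOp A P + diffOp (pderiv i A) P := by
  induction A using MvPolynomial.induction_on generalizing P with
  | C c =>
    rw [diffOp_C, diffOp_C, pderiv_C, diffOp_zero_left, add_zero, mul_smul_comm]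
  | add p q hp hq =>
    rw [diffOp_add_left, diffOp_add_left, map_add, diffOp_add_left, hp, hq]
    ring
  | mul_X p j hp =>
    rcases eq_or_ne i j with rfl | hij
    · rw [diffOp_mul_X, pderiv_mul, pderiv_X_self, one_mul, diffOp_add_right, hp,
        pderiv_mul, pderiv_X_self, mul_one, diffOp_add_left, diffOp_mul_X, diffOp_mul_X]
      ring
    · rw [diffOp_mul_X, pderiv_mul, pderiv_X_of_ne hij, zero_mul, zero_add, hp,
        pderiv_mul, pderiv_X_of_ne (Ne.symm hij), mul_zero, add_zero, diffOp_mul_X, diffOp_mul_X]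

end HamAux

/-- **formula (7).** Let `H` be a quasi-homogeneous polynomial of generalized
degree `χ+δ` with complex coefficients and `𝓗` the derivation
`P ↦ −(∂H/∂x2)·∂P/∂x1 + (∂H/∂x1)·∂P/∂x2`. Then the adjoint `𝓗*` of `𝓗` with respect to the
Fischer inner product `⟨⟨P,Q⟩⟩ = (P(∂1,∂2)Q̄)(0)` is given by
`𝓗*(P) = x2·((∂1H̄)(∂1,∂2)P) − x1·((∂2H̄)(∂1,∂2)P)`, and this also equals
`(∂1H̄)(∂1,∂2)(x2·P) − (∂2H̄)(∂1,∂2)(x1·P)`. -/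
theorem ham_adjoint_formula (γ1 γ2 : ℕ) (hγ1 : 0 < γ1) (hγ2 : 0 < γ2)
    (hcop : Nat.Coprime γ1 γ2) (χ : ℕ)
    (H : MvPolynomial (Fin 2) ℂ)
    (hH : H.IsWeightedHomogeneous ![γ1, γ2] (χ + (γ1 + γ2))) :
    (∀ P Q : MvPolynomial (Fin 2) ℂ,
      finner (X 1 * diffOp (pderiv 0 (conjPoly H)) P - X 0 * diffOp (pderiv 1 (conjPoly H)) P) Q
        = finner P (hamDer H Q)) ∧
    (∀ P : MvPolynomial (Fin 2) ℂ,
      X 1 * diffOp (pderiv 0 (conjPoly H)) P - X 0 * diffOp (pderiv 1 (conjPoly H)) P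
        = diffOp (pderiv 0 (conjPoly H)) (X 1 * P) - diffOp (pderiv 1 (conjPoly H)) (X 0 * P)) := by
  constructor
  · intro P Q
    have hA : conjPoly (pderiv 0 (conjPoly H)) = pderiv 0 H := by
      rw [← conjPoly_pderiv, conjPoly_conjPoly]
    have hB : conjPoly (pderiv 1 (conjPoly H)) = pderiv 1 H := by
      rw [← conjPoly_pderiv, conjPoly_conjPoly]
    rw [finner_sub_left, finner_X_mul, finner_X_mul, finner_diffOp, finner_diffOp,
      hA, hB, ← finner_sub_right]
    refine congrArg (finner P) ?_
    rw [hamDer]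
    ring
  · intro P
    rw [diffOp_X_mul_right, diffOp_X_mul_right,
      show pderiv 1 (pderiv 0 (conjPoly H)) = pderiv 0 (pderiv 1 (conjPoly H)) from
        pderiv_comm' 1 0 (conjPoly H)]
    ring
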